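/- Let T > 0, l ∈ [0,1), integers n_c, n_t ≥ 1, α_max ∈ (0,1), a = α_max/(T(1 − α_max)), and ν_1, …, ν_N ≥ 0 with S = Σ_j ν_j < min{ a / (Σ_{k=0}^{n_c−1} α_max^k), 1 / (T · Σ_{k=1}^{n_c−1} k·α_max^{k−1}) }. Define α(τ) = Tτ/(1+Tτ), γ(τ) = l + (1−l)(1 − exp(−12τ)), and δ(α,γ) = α^{n_c} Σ_{k=0}^{n_t−1} r^k + r^{n_t} with r = γ(1 − α^{n_c}). Let (τ̄_{−i})_{i=1}^N ∈ [0,a]^N be the unique solution of τ̄_{−i} = Σ_{j≠i} ν_j Σ_{k=0}^{n_c−1} α(τ̄_{−j})^k, and let τ̄ ∈ [0,a] be the unique solution of τ̄ = S Σ_{k=0}^{n_c−1} α(τ̄)^k. Suppose τ_max ∈ [0,a] satisfies α(τ_max)^{n_c} ≤ 1/n_t and γ(τ_max)^{n_t} ≤ 1/n_t, and suppose τ̄ ≤ τ_max. Then for every i = 1, …, N, the per-node discard probability satisfies δ(α(τ̄_{−i}), γ(τ̄_{−i})) ≤ δ(α(τ_max), γ(τ_max)); in particular, if δ(α(τ_max),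 γ(τ_max)) ≤ δ̄ for a target δ̄, then every node's discard probability is at most δ̄. -/

import Mathlib

set_option maxHeartbeats 1000000

open Finset


lemma alpha_mono (T s t : ℝ) (hT : 0 < T) (hs : 0 ≤ s) (hst : s ≤ t) :
    T*s/(1+T*s) ≤ T*t/(1+T*t) := by
  have h1 : (0:ℝ) < 1 + T*s := by nlinarith
  have h2 : (0:ℝ) < 1 + T*t := by nlinarith
  rw [div_le_div_iff₀ h1 h2]; nlinarith

lemma alpha_nonneg (T s : ℝ) (hT : 0 < T) (hs : 0 ≤ s) : 0 ≤ T*s/(1+T*s) := by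
  have h1 : (0:ℝ) < 1 + T*s := by nlinarith
  positivity

lemma alpha_le_one (T s : ℝ) (hT : 0 < T) (hs : 0 ≤ s) : T*s/(1+T*s) ≤ 1 := by
  have h1 : (0:ℝ) < 1 + T*s := by nlinarith
  rw [div_le_one h1]; linarith

lemma alpha_le_amax (T t a αmax : ℝ) (hT : 0 < T) (hα0 : 0 < αmax) (hα1 : αmax < 1)
    (ha : a = αmax / (T * (1 - αmax))) (ht : 0 ≤ t) (hta : t ≤ a) :
    T*t/(1+T*t) ≤ αmax := by
  have h1 : (0:ℝ) < 1 + T*t := by nlinarith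
  rw [div_le_iff₀ h1]
  have h2 : (0:ℝ) < 1 - αmax := by linarith
  have h3 : (0:ℝ) < T * (1-αmax) := by positivity
  have h4 : t * (T*(1-αmax)) ≤ αmax := by
    have h5 := mul_le_mul_of_nonneg_right hta h3.le
    rwa [ha, div_mul_cancel₀ _ h3.ne'] at h5
  nlinarith

lemma alpha_lip (T s t : ℝ) (hT : 0 < T) (hs : 0 ≤ s) (hst : s ≤ t) :
    T*t/(1+T*t) - T*s/(1+T*s) ≤ T*(t-s) := by
  have h1 : (0:ℝ) < 1 + T*s := by nlinarith
  have h2 : (0:ℝ) < 1 + T*t := by nlinarith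
  have e : T*t/(1+T*t) - T*s/(1+T*s) = T*(t-s)/((1+T*s)*(1+T*t)) := by
    field_simp; ring
  rw [e]
  have ht : 0 ≤ t := le_trans hs hst
  have hd : 1 ≤ (1+T*s)*(1+T*t) := by nlinarith [mul_nonneg (mul_nonneg hT.le hs) (mul_nonneg hT.le ht)]
  have hn : 0 ≤ T*(t-s) := by nlinarith
  exact div_le_self hn hd


lemma pow_sub_pow_le' (c : ℝ) : ∀ (k : ℕ) (x y : ℝ), 0 ≤ y → y ≤ x → x ≤ c →
    x ^ k - y ^ k ≤ k * c ^ (k - 1) * (x - y) := by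
  intro k
  induction k with
  | zero => intro x y _ _ _; simp
  | succ m ih =>
    intro x y hy hyx hxc
    have hx : 0 ≤ x := le_trans hy hyx
    have hc : 0 ≤ c := le_trans hx hxc
    cases m with
    | zero => simp
    | succ p =>
      simp only [Nat.add_sub_cancel]
      push_cast
      have h1' := ih x y hy hyx hxc
      simp only [Nat.add_sub_cancel] at h1'
      push_cast at h1'
      have hxy0 : 0 ≤ x - y := sub_nonneg.2 hyx
      have hcp : 0 ≤ c ^ p := pow_nonneg hc p
      have hA : x * (x^(p+1) - y^(p+1)) ≤ c * (((p:ℝ)+1) * c^p * (x-y)) := by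
        have hpos : 0 ≤ ((p:ℝ)+1) * c^p * (x-y) := by positivity
        calc x * (x^(p+1) - y^(p+1)) ≤ x * (((p:ℝ)+1)*c^p*(x-y)) :=
              mul_le_mul_of_nonneg_left h1' hx
          _ ≤ c * (((p:ℝ)+1)*c^p*(x-y)) := mul_le_mul_of_nonneg_right hxc hpos
      have h2' : y ^ (p+1) ≤ c ^ (p+1) := pow_le_pow_left₀ hy (le_trans hyx hxc) _
      have hB := mul_le_mul_of_nonneg_right h2' hxy0
      have e1 : x ^ (p + 2) - y ^ (p + 2)
          = x * (x ^ (p+1) - y ^ (p+1)) + y ^ (p+1) * (x - y) := by ring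
      have e2 : c * (((p:ℝ)+1) * c^p * (x-y)) + c^(p+1) * (x-y)
          = ((p:ℝ)+1+1) * c^(p+1) * (x-y) := by ring
      linarith

lemma deltaMono (nt : ℕ) (hnt : 1 ≤ nt) (γ : ℝ) (hγ0 : 0 ≤ γ)
    (hγnt : γ ^ nt ≤ 1 / nt) (b₁ b₂ : ℝ) (hb₁ : 0 ≤ b₁) (hb : b₁ ≤ b₂)
    (hb₂ : b₂ ≤ 1 / nt) :
    b₁ * (∑ k ∈ Finset.range nt, (γ * (1 - b₁)) ^ k) + (γ * (1 - b₁)) ^ nt ≤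
    b₂ * (∑ k ∈ Finset.range nt, (γ * (1 - b₂)) ^ k) + (γ * (1 - b₂)) ^ nt := by
  have hntpos : (0:ℝ) < nt := by exact_mod_cast hnt
  set F : ℝ → ℝ := fun b => b * (∑ k ∈ Finset.range nt, (γ * (1 - b)) ^ k) + (γ * (1 - b)) ^ nt with hF
  have hu : ∀ b : ℝ, HasDerivAt (fun b => γ * (1 - b)) (γ * -1) b := by
    intro b
    exact ((hasDerivAt_id b).const_sub 1).const_mul γ
  have hder : ∀ b : ℝ, HasDerivAt F
      ((∑ k ∈ Finset.range nt, ((γ*(1-b))^k + b * ((k:ℝ) * (γ*(1-b))^(k-1) * (γ * -1))))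
        + (nt:ℝ) * (γ*(1-b))^(nt-1) * (γ * -1)) b := by
    intro b
    have h1 : HasDerivAt (fun b => ∑ k ∈ Finset.range nt, (γ*(1-b))^k)
        (∑ k ∈ Finset.range nt, (k:ℝ) * (γ*(1-b))^(k-1) * (γ * -1)) b :=
      HasDerivAt.fun_sum fun k _ => (hu b).pow k
    have h2 := (hasDerivAt_id b).mul h1
    have h3 := (hu b).pow nt
    have h4 := h2.add h3
    convert h4 using 1
    · rfl
    · rfl
    · rfl
    · simp [Finset.sum_add_distrib, Finset.mul_sum]
  have hmono : MonotoneOn F (Set.Icc 0 (1/(nt:ℝ))) := by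
    apply monotoneOn_of_deriv_nonneg (convex_Icc _ _)
    · exact Continuous.continuousOn (by fun_prop)
    · exact fun b _ => ((hder b).differentiableAt).differentiableWithinAt
    · intro b hbmem
      rw [interior_Icc] at hbmem
      obtain ⟨hb0, hb1⟩ := hbmem
      rw [(hder b).deriv]
      set u := γ * (1 - b) with hu_def
      have hble : b ≤ 1 := by
        have h : (1:ℝ)/nt ≤ 1 := by
          rw [div_le_one hntpos]; exact_mod_cast hnt
        linarith
      have hu0 : 0 ≤ u := mul_nonneg hγ0 (by linarith)
      have huγ : u ≤ γ := by nlinarith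
      have hbnt : b * nt ≤ 1 := by
        have := hb1.le
        rw [le_div_iff₀ hntpos] at this
        linarith
      have hterm : ∀ k ∈ Finset.range nt, (0:ℝ) ≤ u^k + b*((k:ℝ)*u^(k-1)*(γ*-1)) := by
        intro k hk
        rw [Finset.mem_range] at hk
        cases k with
        | zero => simp
        | succ m =>
          simp only [Nat.add_sub_cancel]
          have hm2 : ((m:ℝ)+2) ≤ nt := by exact_mod_cast hk
          have hkb : b * ((m:ℝ)+1) ≤ 1 - b := by nlinarith
          have hum : 0 ≤ u ^ m := pow_nonneg hu0 m
          have hue : u^(m+1) = γ*(1-b)*u^m := by rw [pow_succ]; ring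
          push_cast
          nlinarith [mul_le_mul_of_nonneg_right (mul_le_mul_of_nonneg_left hkb hγ0) hum]
      have hsum : (1:ℝ) ≤ ∑ k ∈ Finset.range nt, (u^k + b*((k:ℝ)*u^(k-1)*(γ*-1))) := by
        have h0 := Finset.single_le_sum hterm (Finset.mem_range.2 (by omega : 0 < nt))
        simpa using h0
      have hlast : (nt:ℝ) * u^(nt-1) * γ ≤ 1 := by
        have hsucc : (nt-1)+1 = nt := by omega
        have h1 : γ * u^(nt-1) ≤ γ^nt := by
          calc γ * u^(nt-1) ≤ γ * γ^(nt-1) :=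
                mul_le_mul_of_nonneg_left (pow_le_pow_left₀ hu0 huγ _) hγ0
            _ = γ^nt := by rw [← pow_succ', hsucc]
        calc (nt:ℝ)*u^(nt-1)*γ = (nt:ℝ) * (γ*u^(nt-1)) := by ring
          _ ≤ (nt:ℝ) * γ^nt := mul_le_mul_of_nonneg_left h1 (le_of_lt hntpos)
          _ ≤ (nt:ℝ) * (1/nt) := mul_le_mul_of_nonneg_left hγnt (le_of_lt hntpos)
          _ = 1 := by field_simp
      have : (nt:ℝ) * u^(nt-1) * (γ * -1) = -((nt:ℝ) * u^(nt-1) * γ) := by ring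
      rw [this]
      linarith
  exact hmono (Set.mem_Icc.2 ⟨hb₁, le_trans hb hb₂⟩) (Set.mem_Icc.2 ⟨le_trans hb₁ hb, hb₂⟩) hb

/-- In the uniqueness regime, if the scalar fixed point `τ̄` satisfies
`τ̄ ≤ τ_max` where `τ_max ∈ [0,a]` is such that `α(τ_max)^{n_c} ≤ 1/n_t` and
`γ(τ_max)^{n_t} ≤ 1/n_t`, then every per-node discard probability
`δ(α(τ̄_{−i}), γ(τ̄_{−i}))` is at most `δ(α(τ_max), γ(τ_max))`; in particular, if the
latter is at most a target `δ̄`, then every node's discard probability is at most `δ̄`.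
Here `α(τ) = Tτ/(1+Tτ)`, `γ(τ) = l + (1−l)(1 − e^{−12τ})`,
`δ(α,γ) = α^{n_c} ∑_{k<n_t} r^k + r^{n_t}` with `r = γ(1−α^{n_c})`. -/
theorem stmt15 (T l : ℝ) (hT : 0 < T) (hl : l ∈ Set.Ico (0 : ℝ) 1)
    (nc nt : ℕ) (hnc : 1 ≤ nc) (hnt : 1 ≤ nt)
    (αmax : ℝ) (hαmax : αmax ∈ Set.Ioo (0 : ℝ) 1)
    (a : ℝ) (ha : a = αmax / (T * (1 - αmax)))
    (N : ℕ) (ν : Fin N → ℝ) (hν : ∀ j, 0 ≤ ν j)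
    (hS : (∑ j, ν j) <
      min (a / ∑ k ∈ Finset.range nc, αmax ^ k)
          (1 / (T * ∑ k ∈ Finset.range nc, (k : ℝ) * αmax ^ (k - 1))))
    (x : Fin N → ℝ) (hx_mem : ∀ i, x i ∈ Set.Icc (0 : ℝ) a)
    (hx_eq : ∀ i : Fin N, x i = ∑ j ∈ Finset.univ.erase i,
      ν j * ∑ k ∈ Finset.range nc, (T * x j / (1 + T * x j)) ^ k)
    (τ : ℝ) (hτ_mem : τ ∈ Set.Icc (0 : ℝ) a)
    (hτ_eq : τ = (∑ j, ν j) * ∑ k ∈ Finset.range nc, (T * τ / (1 + T * τ)) ^ k)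
    (τmax : ℝ) (hτmax_mem : τmax ∈ Set.Icc (0 : ℝ) a)
    (hτmax_α : (T * τmax / (1 + T * τmax)) ^ nc ≤ 1 / (nt : ℝ))
    (hτmax_γ : (l + (1 - l) * (1 - Real.exp (-12 * τmax))) ^ nt ≤ 1 / (nt : ℝ))
    (hττ : τ ≤ τmax) :
    (∀ i : Fin N,
      (T * x i / (1 + T * x i)) ^ nc *
          (∑ k ∈ Finset.range nt,
            ((l + (1 - l) * (1 - Real.exp (-12 * x i))) *
              (1 - (T * x i / (1 + T * x i)) ^ nc)) ^ k) +
        ((l + (1 - l) * (1 - Real.exp (-12 * x i))) *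
          (1 - (T * x i / (1 + T * x i)) ^ nc)) ^ nt
      ≤ (T * τmax / (1 + T * τmax)) ^ nc *
          (∑ k ∈ Finset.range nt,
            ((l + (1 - l) * (1 - Real.exp (-12 * τmax))) *
              (1 - (T * τmax / (1 + T * τmax)) ^ nc)) ^ k) +
        ((l + (1 - l) * (1 - Real.exp (-12 * τmax))) *
          (1 - (T * τmax / (1 + T * τmax)) ^ nc)) ^ nt) ∧
    (∀ δbar : ℝ,
      (T * τmax / (1 + T * τmax)) ^ nc *
          (∑ k ∈ Finset.range nt,
            ((l + (1 - l) * (1 - Real.exp (-12 * τmax))) *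
              (1 - (T * τmax / (1 + T * τmax)) ^ nc)) ^ k) +
        ((l + (1 - l) * (1 - Real.exp (-12 * τmax))) *
          (1 - (T * τmax / (1 + T * τmax)) ^ nc)) ^ nt ≤ δbar →
      ∀ i : Fin N,
        (T * x i / (1 + T * x i)) ^ nc *
            (∑ k ∈ Finset.range nt,
              ((l + (1 - l) * (1 - Real.exp (-12 * x i))) *
                (1 - (T * x i / (1 + T * x i)) ^ nc)) ^ k) +
          ((l + (1 - l) * (1 - Real.exp (-12 * x i))) *
            (1 - (T * x i / (1 + T * x i)) ^ nc)) ^ nt ≤ δbar) := by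
  obtain ⟨hl0, hl1⟩ := hl
  obtain ⟨hα0, hα1⟩ := hαmax
  have hS0 : 0 ≤ ∑ j, ν j := Finset.sum_nonneg fun j _ => hν j
  have hτ0 : 0 ≤ τ := hτ_mem.1
  have hτmax0 : 0 ≤ τmax := hτmax_mem.1
  -- every per-node fixed point is at most τ
  have hkey : ∀ i, x i ≤ τ := by
    intro i
    obtain ⟨i₀, -, hi₀⟩ := Finset.exists_max_image Finset.univ x ⟨i, Finset.mem_univ i⟩
    have hmax : ∀ j, x j ≤ x i₀ := fun j => hi₀ j (Finset.mem_univ j)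
    refine le_trans (hmax i) ?_
    by_contra hcon
    push_neg at hcon
    have hM0 : 0 ≤ x i₀ := (hx_mem i₀).1
    have hMa : x i₀ ≤ a := (hx_mem i₀).2
    have hMle : x i₀ ≤ (∑ j, ν j) * ∑ k ∈ Finset.range nc, (T * x i₀ / (1 + T * x i₀)) ^ k := by
      calc x i₀ = ∑ j ∈ Finset.univ.erase i₀,
            ν j * ∑ k ∈ Finset.range nc, (T * x j / (1 + T * x j)) ^ k := hx_eq i₀
        _ ≤ ∑ j ∈ Finset.univ.erase i₀,
            ν j * ∑ k ∈ Finset.range nc, (T * x i₀ / (1 + T * x i₀)) ^ k := by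
            refine Finset.sum_le_sum fun j _ => mul_le_mul_of_nonneg_left ?_ (hν j)
            refine Finset.sum_le_sum fun k _ => pow_le_pow_left₀
              (alpha_nonneg T (x j) hT (hx_mem j).1)
              (alpha_mono T (x j) (x i₀) hT (hx_mem j).1 (hmax j)) k
        _ ≤ ∑ j, ν j * ∑ k ∈ Finset.range nc, (T * x i₀ / (1 + T * x i₀)) ^ k := by
            refine Finset.sum_le_sum_of_subset_of_nonneg (Finset.erase_subset _ _)
              fun j _ _ => mul_nonneg (hν j) (Finset.sum_nonneg fun k _ =>
                pow_nonneg (alpha_nonneg T (x i₀) hT hM0) k)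
        _ = (∑ j, ν j) * ∑ k ∈ Finset.range nc, (T * x i₀ / (1 + T * x i₀)) ^ k := by
            rw [Finset.sum_mul]
    -- Lipschitz bound on the sum of powers
    have hατ0 : 0 ≤ T * τ / (1 + T * τ) := alpha_nonneg T τ hT hτ0
    have hατM : T * τ / (1 + T * τ) ≤ T * x i₀ / (1 + T * x i₀) :=
      alpha_mono T τ (x i₀) hT hτ0 hcon.le
    have hαMmax : T * x i₀ / (1 + T * x i₀) ≤ αmax :=
      alpha_le_amax T (x i₀) a αmax hT hα0 hα1 ha hM0 hMa
    have hlip : T * x i₀ / (1 + T * x i₀) - T * τ / (1 + T * τ) ≤ T * (x i₀ - τ) :=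
      alpha_lip T τ (x i₀) hT hτ0 hcon.le
    have hdiff : (∑ k ∈ Finset.range nc, (T * x i₀ / (1 + T * x i₀)) ^ k)
        - (∑ k ∈ Finset.range nc, (T * τ / (1 + T * τ)) ^ k)
        ≤ (∑ k ∈ Finset.range nc, (k:ℝ) * αmax ^ (k-1)) * (T * (x i₀ - τ)) := by
      rw [← Finset.sum_sub_distrib, Finset.sum_mul]
      refine Finset.sum_le_sum fun k _ => ?_
      calc (T * x i₀ / (1 + T * x i₀)) ^ k - (T * τ / (1 + T * τ)) ^ k
          ≤ (k:ℝ) * αmax ^ (k-1) * (T * x i₀ / (1 + T * x i₀) - T * τ / (1 + T * τ)) :=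
            pow_sub_pow_le' αmax k _ _ hατ0 hατM hαMmax
        _ ≤ (k:ℝ) * αmax ^ (k-1) * (T * (x i₀ - τ)) := by
            refine mul_le_mul_of_nonneg_left hlip ?_
            positivity
    set C := T * ∑ k ∈ Finset.range nc, (k:ℝ) * αmax ^ (k-1) with hC
    have hC0 : 0 ≤ C := by
      refine mul_nonneg hT.le (Finset.sum_nonneg fun k _ => by positivity)
    have hS2 : (∑ j, ν j) < 1 / C := lt_of_lt_of_le hS (min_le_right _ _)
    rcases eq_or_lt_of_le hC0 with hCz | hCpos
    · rw [← hCz] at hS2; simp at hS2; linarith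
    · have hSC : (∑ j, ν j) * C < 1 := (lt_div_iff₀ hCpos).mp hS2
      have hchain : x i₀ - τ ≤ (∑ j, ν j) * C * (x i₀ - τ) := by
        have h1 : x i₀ - τ ≤ (∑ j, ν j) *
            ((∑ k ∈ Finset.range nc, (T * x i₀ / (1 + T * x i₀)) ^ k)
              - (∑ k ∈ Finset.range nc, (T * τ / (1 + T * τ)) ^ k)) := by
          nlinarith [hMle, hτ_eq]
        have h2 := mul_le_mul_of_nonneg_left hdiff hS0
        calc x i₀ - τ ≤ _ := h1
          _ ≤ (∑ j, ν j) * ((∑ k ∈ Finset.range nc, (k:ℝ) * αmax ^ (k-1)) * (T * (x i₀ - τ))) := h2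
          _ = (∑ j, ν j) * C * (x i₀ - τ) := by rw [hC]; ring
      nlinarith [hchain, hSC, hcon]
  -- now the per-node bound
  have hmain : ∀ i : Fin N,
      (T * x i / (1 + T * x i)) ^ nc *
          (∑ k ∈ Finset.range nt,
            ((l + (1 - l) * (1 - Real.exp (-12 * x i))) *
              (1 - (T * x i / (1 + T * x i)) ^ nc)) ^ k) +
        ((l + (1 - l) * (1 - Real.exp (-12 * x i))) *
          (1 - (T * x i / (1 + T * x i)) ^ nc)) ^ nt
      ≤ (T * τmax / (1 + T * τmax)) ^ nc *
          (∑ k ∈ Finset.range nt,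
            ((l + (1 - l) * (1 - Real.exp (-12 * τmax))) *
              (1 - (T * τmax / (1 + T * τmax)) ^ nc)) ^ k) +
        ((l + (1 - l) * (1 - Real.exp (-12 * τmax))) *
          (1 - (T * τmax / (1 + T * τmax)) ^ nc)) ^ nt := by
    intro i
    have hs0 : 0 ≤ x i := (hx_mem i).1
    have hsτ : x i ≤ τmax := le_trans (hkey i) hττ
    set γ₁ := l + (1 - l) * (1 - Real.exp (-12 * x i)) with hγ₁
    set γ₂ := l + (1 - l) * (1 - Real.exp (-12 * τmax)) with hγ₂
    set b₁ := (T * x i / (1 + T * x i)) ^ nc with hb₁d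
    set b₂ := (T * τmax / (1 + T * τmax)) ^ nc with hb₂d
    have hαs0 : 0 ≤ T * x i / (1 + T * x i) := alpha_nonneg T (x i) hT hs0
    have hb₁0 : 0 ≤ b₁ := pow_nonneg hαs0 nc
    have hb₁1 : b₁ ≤ 1 := pow_le_one₀ hαs0 (alpha_le_one T (x i) hT hs0)
    have hb12 : b₁ ≤ b₂ :=
      pow_le_pow_left₀ hαs0 (alpha_mono T (x i) τmax hT hs0 hsτ) nc
    have hexp1 : Real.exp (-12 * x i) ≤ 1 := Real.exp_le_one_iff.2 (by linarith)
    have hexp2 : Real.exp (-12 * τmax) ≤ Real.exp (-12 * x i) :=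
      Real.exp_le_exp.2 (by linarith)
    have hγ1_0 : 0 ≤ γ₁ := by
      rw [hγ₁]; nlinarith
    have hγ12 : γ₁ ≤ γ₂ := by
      rw [hγ₁, hγ₂]; nlinarith
    have hγ2_0 : 0 ≤ γ₂ := le_trans hγ1_0 hγ12
    have hr12 : γ₁ * (1 - b₁) ≤ γ₂ * (1 - b₁) :=
      mul_le_mul_of_nonneg_right hγ12 (by linarith)
    have hr1_0 : 0 ≤ γ₁ * (1 - b₁) := mul_nonneg hγ1_0 (by linarith)
    have stepA : b₁ * (∑ k ∈ Finset.range nt, (γ₁ * (1 - b₁)) ^ k) + (γ₁ * (1 - b₁)) ^ nt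
        ≤ b₁ * (∑ k ∈ Finset.range nt, (γ₂ * (1 - b₁)) ^ k) + (γ₂ * (1 - b₁)) ^ nt :=
      add_le_add
        (mul_le_mul_of_nonneg_left
          (Finset.sum_le_sum fun k _ => pow_le_pow_left₀ hr1_0 hr12 k) hb₁0)
        (pow_le_pow_left₀ hr1_0 hr12 nt)
    have stepB := deltaMono nt hnt γ₂ hγ2_0 hτmax_γ b₁ b₂ hb₁0 hb12 hτmax_α
    exact le_trans stepA stepB
  exact ⟨hmain, fun δbar hδ i => le_trans (hmain i) hδ⟩
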